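/- For real numbers x, y and p ≥ 2, ((|x+y|^p + |x-y|^p)/2)^{2/p} ≤ x^2 + (p-1) y^2. -/

import Mathlib

lemma geom2 {a r : ℝ} (ha : 0 ≤ a) (h0 : 0 ≤ r) (h1 : r ≤ 1) :
    a ^ r ≤ r * a + (1 - r) := by
  have := Real.geom_mean_le_arith_mean2_weighted h0 (by linarith : (0:ℝ) ≤ 1 - r)
    ha zero_le_one (by ring)
  simpa using this

lemma geom2' {a r : ℝ} (ha : 0 ≤ a) (h1 : 1 ≤ r) (h2 : r ≤ 2) :
    a ^ r ≤ (2 - r) * a + (r - 1) * a ^ 2 := by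
  have key := Real.geom_mean_le_arith_mean2_weighted (by linarith : (0:ℝ) ≤ 2 - r)
    (by linarith : (0:ℝ) ≤ r - 1) ha (by positivity : (0:ℝ) ≤ a ^ 2) (by ring)
  rcases eq_or_lt_of_le ha with h | h
  · rw [← h, Real.zero_rpow (by linarith : r ≠ 0)]
    nlinarith
  · calc a ^ r = a ^ (2 - r) * (a ^ 2) ^ (r - 1) := by
          rw [← Real.rpow_natCast a 2, ← Real.rpow_mul ha, ← Real.rpow_add h]
          norm_num
          ring_nf
        _ ≤ (2 - r) * a + (r - 1) * a ^ 2 := key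

lemma Cprime {p t : ℝ} (hp2 : 2 ≤ p) (hp4 : p ≤ 4) (ht0 : 0 ≤ t) (ht1 : t ≤ 1) :
    ((1 + t) ^ (p - 2) + (1 - t) ^ (p - 2)) / 2 * (1 + (p - 1) * t ^ 2) ^ (2 - p / 2)
      ≤ 1 + (p - 1) ^ 2 * t ^ 2 := by
  have hu : (0:ℝ) ≤ (p - 1) * t ^ 2 := by nlinarith
  have hB : (1 + (p - 1) * t ^ 2) ^ (2 - p / 2) ≤ 1 + (2 - p / 2) * ((p - 1) * t ^ 2) := by
    have := geom2 (a := 1 + (p - 1) * t ^ 2) (r := 2 - p / 2) (by linarith)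
      (by linarith) (by linarith)
    nlinarith [this]
  have hBnn : (0:ℝ) ≤ (1 + (p - 1) * t ^ 2) ^ (2 - p / 2) :=
    Real.rpow_nonneg (by linarith) _
  have h1t : (0:ℝ) ≤ 1 + t := by linarith
  have h2t : (0:ℝ) ≤ 1 - t := by linarith
  rcases le_total p 3 with h3 | h3
  · -- p ∈ [2,3]
    have hA : ((1 + t) ^ (p - 2) + (1 - t) ^ (p - 2)) / 2 ≤ 1 := by
      have a1 := geom2 h1t (by linarith : (0:ℝ) ≤ p - 2) (by linarith)
      have a2 := geom2 h2t (by linarith : (0:ℝ) ≤ p - 2) (by linarith)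
      nlinarith
    have hAnn : (0:ℝ) ≤ ((1 + t) ^ (p - 2) + (1 - t) ^ (p - 2)) / 2 := by
      have := Real.rpow_nonneg h1t (p - 2)
      have := Real.rpow_nonneg h2t (p - 2)
      linarith
    calc ((1 + t) ^ (p - 2) + (1 - t) ^ (p - 2)) / 2 * (1 + (p - 1) * t ^ 2) ^ (2 - p / 2)
        ≤ 1 * (1 + (2 - p / 2) * ((p - 1) * t ^ 2)) := by
          apply mul_le_mul hA (le_trans hB le_rfl) hBnn zero_le_one
      _ ≤ 1 + (p - 1) ^ 2 * t ^ 2 := by nlinarith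
  · -- p ∈ [3,4]
    have hA : ((1 + t) ^ (p - 2) + (1 - t) ^ (p - 2)) / 2 ≤ 1 + (p - 3) * t ^ 2 := by
      have a1 := geom2' h1t (by linarith : (1:ℝ) ≤ p - 2) (by linarith)
      have a2 := geom2' h2t (by linarith : (1:ℝ) ≤ p - 2) (by linarith)
      nlinarith
    have hAnn : (0:ℝ) ≤ ((1 + t) ^ (p - 2) + (1 - t) ^ (p - 2)) / 2 := by
      have := Real.rpow_nonneg h1t (p - 2)
      have := Real.rpow_nonneg h2t (p - 2)
      linarith
    have hAnn' : (0:ℝ) ≤ 1 + (p - 3) * t ^ 2 := by nlinarith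
    have hh1 : (0:ℝ) ≤ (p - 3) * (4 - p) * t ^ 2 := by
      apply mul_nonneg (mul_nonneg (by linarith) (by linarith)) (sq_nonneg t)
    have hh2 : (0:ℝ) ≤ (p - 3) * (4 - p) * (t * t) ^ 2 := by
      apply mul_nonneg (mul_nonneg (by linarith) (by linarith)) (sq_nonneg (t * t))
    have hh4 : (0:ℝ) ≤ (p - 3) * ((2 - p / 2) * ((p - 1) * (t ^ 2 * (1 - t ^ 2)))) := by
      apply mul_nonneg (by linarith)
      apply mul_nonneg (by linarith)
      apply mul_nonneg (by linarith)
      apply mul_nonneg (sq_nonneg t)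
      nlinarith
    have hh5 : (0:ℝ) ≤ t ^ 2 * (p ^ 3 / 2 - 5 * p ^ 2 / 2 + 4 * p) := by
      apply mul_nonneg (sq_nonneg t)
      nlinarith [sq_nonneg (p - 5 / 2)]
    calc ((1 + t) ^ (p - 2) + (1 - t) ^ (p - 2)) / 2 * (1 + (p - 1) * t ^ 2) ^ (2 - p / 2)
        ≤ (1 + (p - 3) * t ^ 2) * (1 + (2 - p / 2) * ((p - 1) * t ^ 2)) :=
          mul_le_mul hA hB hBnn hAnn'
      _ ≤ 1 + (p - 1) ^ 2 * t ^ 2 := by nlinarith [hh4, hh5]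

section base
variable {p : ℝ}

noncomputable def gfun (p t : ℝ) : ℝ :=
  (p - 1) * t * (1 + (p - 1) * t ^ 2) ^ (p / 2 - 1) - ((1 + t) ^ (p - 1) - (1 - t) ^ (p - 1)) / 2

noncomputable def ffun (p t : ℝ) : ℝ :=
  (1 + (p - 1) * t ^ 2) ^ (p / 2) - ((1 + t) ^ p + (1 - t) ^ p) / 2

lemma hbase_pos (hp2 : 2 ≤ p) (t : ℝ) : (0:ℝ) < 1 + (p - 1) * t ^ 2 := by nlinarith [sq_nonneg t]

lemma inner_hasDeriv (t : ℝ) : HasDerivAt (fun t : ℝ => 1 + (p - 1) * t ^ 2) (2 * (p - 1) * t) t := by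
  have : HasDerivAt (fun t : ℝ => t ^ 2) (2 * t) t := by simpa using hasDerivAt_pow 2 t
  simpa [mul_comm, mul_assoc, mul_left_comm] using (this.const_mul (p - 1)).const_add 1

lemma gfun_hasDeriv (hp2 : 2 ≤ p) {t : ℝ} (ht0 : 0 < t) (ht1 : t < 1) :
    HasDerivAt (gfun p)
      ((p - 1) * (1 + (p - 1) * t ^ 2) ^ (p / 2 - 1)
        + (p - 1) * t * (2 * (p - 1) * t * (p / 2 - 1) * (1 + (p - 1) * t ^ 2) ^ (p / 2 - 2))
        - ((p - 1) * (1 + t) ^ (p - 2) + (p - 1) * (1 - t) ^ (p - 2)) / 2) t := by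
  have hb := hbase_pos hp2 t
  have h1t : (0:ℝ) < 1 + t := by linarith
  have h2t : (0:ℝ) < 1 - t := by linarith
  have hq : HasDerivAt (fun t : ℝ => (1 + (p - 1) * t ^ 2) ^ (p / 2 - 1))
      (2 * (p - 1) * t * (p / 2 - 1) * (1 + (p - 1) * t ^ 2) ^ (p / 2 - 2)) t := by
    have := (inner_hasDeriv (p := p) t).rpow_const (p := p / 2 - 1) (Or.inl hb.ne')
    convert this using 1
    ring_nf
  have hlin : HasDerivAt (fun t : ℝ => (p - 1) * t) (p - 1) t := by
    simpa using (hasDerivAt_id t).const_mul (p - 1)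
  have hprod := hlin.mul hq
  have ha : HasDerivAt (fun t : ℝ => (1 + t) ^ (p - 1)) (1 * (p - 1) * (1 + t) ^ (p - 1 - 1)) t :=
    (((hasDerivAt_id t).const_add 1)).rpow_const (Or.inl h1t.ne')
  have hc : HasDerivAt (fun t : ℝ => (1 - t) ^ (p - 1)) ((-1) * (p - 1) * (1 - t) ^ (p - 1 - 1)) t :=
    (((hasDerivAt_id t).const_sub 1)).rpow_const (Or.inl h2t.ne')
  have := hprod.sub ((ha.sub hc).div_const 2)
  convert this using 1
  · rfl
  · rfl
  · rfl
  have e1 : p - 1 - 1 = p - 2 := by ring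
  rw [e1]
  ring
lemma gfun_deriv_nonneg (hp2 : 2 ≤ p) (hp4 : p ≤ 4) {t : ℝ} (ht0 : 0 < t) (ht1 : t < 1) :
    0 ≤ (p - 1) * (1 + (p - 1) * t ^ 2) ^ (p / 2 - 1)
        + (p - 1) * t * (2 * (p - 1) * t * (p / 2 - 1) * (1 + (p - 1) * t ^ 2) ^ (p / 2 - 2))
        - ((p - 1) * (1 + t) ^ (p - 2) + (p - 1) * (1 - t) ^ (p - 2)) / 2 := by
  have hb := hbase_pos hp2 t
  have hBpos : (0:ℝ) < (1 + (p - 1) * t ^ 2) ^ (2 - p / 2) := Real.rpow_pos_of_pos hb _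
  have hinv : (1 + (p - 1) * t ^ 2) ^ (p / 2 - 2)
      = ((1 + (p - 1) * t ^ 2) ^ (2 - p / 2))⁻¹ := by
    rw [← Real.rpow_neg hb.le]
    norm_num
  have hsplit : (1 + (p - 1) * t ^ 2) ^ (p / 2 - 1)
      = (1 + (p - 1) * t ^ 2) * (1 + (p - 1) * t ^ 2) ^ (p / 2 - 2) := by
    rw [show p / 2 - 1 = 1 + (p / 2 - 2) by ring, Real.rpow_add hb, Real.rpow_one]
  have hC := Cprime hp2 hp4 ht0.le ht1.le
  have hA_le : ((1 + t) ^ (p - 2) + (1 - t) ^ (p - 2)) / 2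
      ≤ (1 + (p - 1) ^ 2 * t ^ 2) * (1 + (p - 1) * t ^ 2) ^ (p / 2 - 2) := by
    rw [hinv, ← div_eq_mul_inv, le_div_iff₀ hBpos]
    exact hC
  have key : 0 ≤ (p - 1) * ((1 + (p - 1) ^ 2 * t ^ 2) * (1 + (p - 1) * t ^ 2) ^ (p / 2 - 2)
      - ((1 + t) ^ (p - 2) + (1 - t) ^ (p - 2)) / 2) :=
    mul_nonneg (by linarith) (by linarith [hA_le])
  rw [hsplit]
  nlinarith [key]

end base

lemma gfun_cont (hp2 : 2 ≤ p) : Continuous (gfun p) := by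
  unfold gfun
  apply Continuous.sub
  · apply Continuous.mul (continuous_const.mul continuous_id)
    apply Continuous.rpow_const
      (continuous_const.add (continuous_const.mul (continuous_pow 2)))
    intro x; exact Or.inl (hbase_pos hp2 x).ne'
  · apply Continuous.div_const
    apply Continuous.sub
    · exact (continuous_const.add continuous_id).rpow_const (fun x => Or.inr (by linarith))
    · exact (continuous_const.sub continuous_id).rpow_const (fun x => Or.inr (by linarith))

lemma gfun_nonneg (hp2 : 2 ≤ p) (hp4 : p ≤ 4) {t : ℝ} (ht0 : 0 ≤ t) (ht1 : t ≤ 1) :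
    0 ≤ gfun p t := by
  have mono : MonotoneOn (gfun p) (Set.Icc 0 1) := by
    apply monotoneOn_of_deriv_nonneg (convex_Icc 0 1) (gfun_cont hp2).continuousOn
    · rw [interior_Icc]
      intro x hx
      exact ((gfun_hasDeriv hp2 hx.1 hx.2).differentiableAt).differentiableWithinAt
    · rw [interior_Icc]
      intro x hx
      rw [(gfun_hasDeriv hp2 hx.1 hx.2).deriv]
      exact gfun_deriv_nonneg hp2 hp4 hx.1 hx.2
  have h0 : gfun p 0 = 0 := by simp [gfun]
  have := mono (Set.mem_Icc.2 ⟨le_refl 0, zero_le_one⟩) (Set.mem_Icc.2 ⟨ht0, ht1⟩) ht0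
  rw [h0] at this; exact this

lemma ffun_hasDeriv (hp2 : 2 ≤ p) {t : ℝ} (ht0 : 0 < t) (ht1 : t < 1) :
    HasDerivAt (ffun p) (p * gfun p t) t := by
  have hb := hbase_pos hp2 t
  have h1t : (0:ℝ) < 1 + t := by linarith
  have h2t : (0:ℝ) < 1 - t := by linarith
  have hq : HasDerivAt (fun t : ℝ => (1 + (p - 1) * t ^ 2) ^ (p / 2))
      (2 * (p - 1) * t * (p / 2) * (1 + (p - 1) * t ^ 2) ^ (p / 2 - 1)) t :=
    (inner_hasDeriv (p := p) t).rpow_const (Or.inl hb.ne')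
  have ha : HasDerivAt (fun t : ℝ => (1 + t) ^ p) (1 * p * (1 + t) ^ (p - 1)) t :=
    (((hasDerivAt_id t).const_add 1)).rpow_const (Or.inl h1t.ne')
  have hc : HasDerivAt (fun t : ℝ => (1 - t) ^ p) ((-1) * p * (1 - t) ^ (p - 1)) t :=
    (((hasDerivAt_id t).const_sub 1)).rpow_const (Or.inl h2t.ne')
  have := hq.sub ((ha.add hc).div_const 2)
  convert this using 1
  · rfl
  · rfl
  · rfl
  unfold gfun
  ring

lemma ffun_cont (hp2 : 2 ≤ p) : Continuous (ffun p) := by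
  unfold ffun
  apply Continuous.sub
  · apply Continuous.rpow_const
      (continuous_const.add (continuous_const.mul (continuous_pow 2)))
    intro x; exact Or.inl (hbase_pos hp2 x).ne'
  · apply Continuous.div_const
    apply Continuous.add
    · exact (continuous_const.add continuous_id).rpow_const (fun x => Or.inr (by linarith))
    · exact (continuous_const.sub continuous_id).rpow_const (fun x => Or.inr (by linarith))

lemma core_base (hp2 : 2 ≤ p) (hp4 : p ≤ 4) {t : ℝ} (ht0 : 0 ≤ t) (ht1 : t ≤ 1) :
    ((1 + t) ^ p + (1 - t) ^ p) / 2 ≤ (1 + (p - 1) * t ^ 2) ^ (p / 2) := by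
  have mono : MonotoneOn (ffun p) (Set.Icc 0 1) := by
    apply monotoneOn_of_deriv_nonneg (convex_Icc 0 1) (ffun_cont hp2).continuousOn
    · rw [interior_Icc]
      intro x hx
      exact ((ffun_hasDeriv hp2 hx.1 hx.2).differentiableAt).differentiableWithinAt
    · rw [interior_Icc]
      intro x hx
      rw [(ffun_hasDeriv hp2 hx.1 hx.2).deriv]
      exact mul_nonneg (by linarith) (gfun_nonneg hp2 hp4 hx.1.le hx.2.le)
  have h0 : ffun p 0 = 0 := by simp [ffun]
  have := mono (Set.mem_Icc.2 ⟨le_refl 0, zero_le_one⟩) (Set.mem_Icc.2 ⟨ht0, ht1⟩) ht0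
  rw [h0] at this
  unfold ffun at this
  linarith

def Core (p : ℝ) : Prop :=
  ∀ t : ℝ, 0 ≤ t → t ≤ 1 → ((1 + t) ^ p + (1 - t) ^ p) / 2 ≤ (1 + (p - 1) * t ^ 2) ^ (p / 2)

lemma core_hom {q : ℝ} (hq : 2 ≤ q) (hc : Core q) {u v : ℝ} (hv : 0 ≤ v) (hvu : v ≤ u) :
    ((u + v) ^ q + (u - v) ^ q) / 2 ≤ (u ^ 2 + (q - 1) * v ^ 2) ^ (q / 2) := by
  have hu : 0 ≤ u := le_trans hv hvu
  rcases eq_or_lt_of_le hu with h | h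
  · have hv0 : v = 0 := le_antisymm (by linarith) hv
    have hu0 : u = 0 := h.symm
    subst hv0; subst hu0
    norm_num [Real.zero_rpow (show q ≠ 0 by linarith),
      Real.zero_rpow (show q / 2 ≠ 0 by positivity)]
  · set t := v / u with htdef
    have ht0 : 0 ≤ t := div_nonneg hv hu
    have ht1 : t ≤ 1 := (div_le_one h).2 hvu
    have key := hc t ht0 ht1
    have hup : (0:ℝ) < u ^ (q:ℝ) := Real.rpow_pos_of_pos h q
    have e1 : u + v = u * (1 + t) := by rw [htdef]; field_simp
    have e2 : u - v = u * (1 - t) := by rw [htdef]; field_simp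
    have e3 : (u * (1 + t)) ^ q = u ^ q * (1 + t) ^ q := Real.mul_rpow hu (by linarith)
    have e4 : (u * (1 - t)) ^ q = u ^ q * (1 - t) ^ q := Real.mul_rpow hu (by linarith)
    have e5 : u ^ 2 + (q - 1) * v ^ 2 = u ^ 2 * (1 + (q - 1) * t ^ 2) := by
      rw [htdef]; field_simp
    have e6 : (u ^ 2 * (1 + (q - 1) * t ^ 2)) ^ (q / 2)
        = u ^ q * (1 + (q - 1) * t ^ 2) ^ (q / 2) := by
      rw [Real.mul_rpow (by positivity) (by nlinarith [sq_nonneg t])]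
      congr 1
      rw [← Real.rpow_natCast u 2, ← Real.rpow_mul hu,
        show ((2:ℕ):ℝ) * (q / 2) = q by push_cast; ring]
    rw [e1, e2, e3, e4, e5, e6]
    calc (u ^ q * (1 + t) ^ q + u ^ q * (1 - t) ^ q) / 2
        = u ^ q * (((1 + t) ^ q + (1 - t) ^ q) / 2) := by ring
      _ ≤ u ^ q * ((1 + (q - 1) * t ^ 2) ^ (q / 2)) := mul_le_mul_of_nonneg_left key hup.le

lemma core_double {q : ℝ} (hq : 2 ≤ q) (hc : Core q) : Core (2 * q) := by
  intro t ht0 ht1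
  have h1t : (0:ℝ) ≤ 1 + t := by linarith
  have h2t : (0:ℝ) ≤ 1 - t := by linarith
  have e1 : (1 + t) ^ (2 * q) = ((1 + t) ^ 2) ^ q := by
    rw [Real.rpow_mul h1t, show ((2:ℝ)) = ((2:ℕ):ℝ) by push_cast; ring, Real.rpow_natCast]
  have e2 : (1 - t) ^ (2 * q) = ((1 - t) ^ 2) ^ q := by
    rw [Real.rpow_mul h2t, show ((2:ℝ)) = ((2:ℕ):ℝ) by push_cast; ring, Real.rpow_natCast]
  have hh := core_hom hq hc (v := 2 * t) (u := 1 + t ^ 2) (by linarith)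
    (by nlinarith [sq_nonneg (1 - t)])
  have e3 : ((1 + t ^ 2) + 2 * t) = (1 + t) ^ 2 := by ring
  have e4 : ((1 + t ^ 2) - 2 * t) = (1 - t) ^ 2 := by ring
  rw [e3, e4] at hh
  have hXnn : (0:ℝ) ≤ 1 + (2 * q - 1) * t ^ 2 := by nlinarith [sq_nonneg t]
  calc ((1 + t) ^ (2 * q) + (1 - t) ^ (2 * q)) / 2
      = (((1 + t) ^ 2) ^ q + ((1 - t) ^ 2) ^ q) / 2 := by rw [e1, e2]
    _ ≤ ((1 + t ^ 2) ^ 2 + (q - 1) * (2 * t) ^ 2) ^ (q / 2) := hh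
    _ ≤ ((1 + (2 * q - 1) * t ^ 2) ^ 2) ^ (q / 2) := by
        apply Real.rpow_le_rpow (by nlinarith [sq_nonneg t, sq_nonneg (t*t)])
          (by nlinarith [sq_nonneg (t*t), sq_nonneg t,
            mul_nonneg (mul_nonneg (show (0:ℝ) ≤ 4 * q by linarith)
              (show (0:ℝ) ≤ q - 1 by linarith)) (sq_nonneg (t ^ 2))]) (by linarith)
    _ = (1 + (2 * q - 1) * t ^ 2) ^ (2 * q / 2) := by
        rw [← Real.rpow_natCast (1 + (2 * q - 1) * t ^ 2) 2, ← Real.rpow_mul hXnn]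
        norm_num
        ring_nf

lemma core_all {p : ℝ} (hp : 2 ≤ p) : Core p := by
  obtain ⟨n, hn⟩ : ∃ n : ℕ, p ≤ 4 * 2 ^ n := by
    obtain ⟨n, hn⟩ := pow_unbounded_of_one_lt p (one_lt_two (α := ℝ))
    have h2n : (0:ℝ) < 2 ^ n := by positivity
    exact ⟨n, by nlinarith⟩
  induction n generalizing p with
  | zero =>
    intro t ht0 ht1
    exact core_base hp (by norm_num at hn; linarith) ht0 ht1
  | succ n ih =>
    rcases le_total p (4 * 2 ^ n) with h | h
    · exact ih hp h
    · have h2n : (1:ℝ) ≤ 2 ^ n := one_le_pow₀ (by norm_num)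
      have h2 : 2 ≤ p / 2 := by nlinarith
      have h3 : p / 2 ≤ 4 * 2 ^ n := by
        rw [pow_succ] at hn; linarith
      have := core_double h2 (ih h2 h3)
      rw [show 2 * (p / 2) = p by ring] at this
      exact this


lemma main0 {p x y : ℝ} (hp : 2 ≤ p) (hy : 0 ≤ y) (hxy : y ≤ x) :
    ((x + y) ^ p + (x - y) ^ p) / 2 ≤ (x ^ 2 + (p - 1) * y ^ 2) ^ (p / 2) :=
  core_hom hp (core_all hp) hy hxy

theorem two_point_inequality (x y p : ℝ) (hp : 2 ≤ p) :
    ((|x + y| ^ p + |x - y| ^ p) / 2) ^ (2 / p) ≤ x ^ 2 + (p - 1) * y ^ 2 := by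
  have hp0 : (0:ℝ) < p := by linarith
  have key : (|x + y| = |x| + |y| ∧ |x - y| = |(|x| - |y|)|)
      ∨ (|x + y| = |(|x| - |y|)| ∧ |x - y| = |x| + |y|) := by
    rcases le_total 0 x with hx | hx <;> rcases le_total 0 y with hy | hy
    · left; constructor
      · rw [abs_of_nonneg hx, abs_of_nonneg hy, abs_of_nonneg (by linarith : 0 ≤ x + y)]
      · rw [abs_of_nonneg hx, abs_of_nonneg hy]
    · right; constructor
      · rw [abs_of_nonneg hx, abs_of_nonpos hy, show x - -y = x + y by ring]
      · rw [abs_of_nonneg hx, abs_of_nonpos hy,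
          abs_of_nonneg (by linarith : 0 ≤ x - y)]; ring
    · right; constructor
      · rw [abs_of_nonpos hx, abs_of_nonneg hy, show -x - y = -(x + y) by ring, abs_neg]
      · rw [abs_of_nonpos hx, abs_of_nonneg hy,
          abs_of_nonpos (by linarith : x - y ≤ 0)]; ring
    · left; constructor
      · rw [abs_of_nonpos hx, abs_of_nonpos hy,
          abs_of_nonpos (by linarith : x + y ≤ 0)]; ring
      · rw [abs_of_nonpos hx, abs_of_nonpos hy, show -x - -y = -(x - y) by ring, abs_neg]
  have habs : |x + y| ^ p + |x - y| ^ p = (|x| + |y|) ^ p + |(|x| - |y|)| ^ p := by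
    rcases key with ⟨h1, h2⟩ | ⟨h1, h2⟩
    · rw [h1, h2]
    · rw [h1, h2]; exact add_comm _ _
  set A := max (|x|) (|y|) with hA
  set B := min (|x|) (|y|) with hB
  have hBA : B ≤ A := min_le_max
  have hB0 : 0 ≤ B := le_min (abs_nonneg _) (abs_nonneg _)
  have hsum : |x| + |y| = A + B := (max_add_min _ _).symm
  have hdiff : |(|x| - |y|)| = A - B := by rw [hA, hB, max_sub_min_eq_abs]; exact abs_sub_comm _ _
  have hRA : A ^ 2 + (p - 1) * B ^ 2 ≤ x ^ 2 + (p - 1) * y ^ 2 := by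
    rcases le_total (|y|) (|x|) with h | h
    · rw [hA, hB, max_eq_left h, min_eq_right h, sq_abs, sq_abs]
    · rw [hA, hB, max_eq_right h, min_eq_left h, sq_abs, sq_abs]
      have hx2y2 : x ^ 2 ≤ y ^ 2 := by
        nlinarith [sq_abs x, sq_abs y, mul_self_le_mul_self (abs_nonneg x) h]
      nlinarith
  have hR0 : (0:ℝ) ≤ x ^ 2 + (p - 1) * y ^ 2 := by nlinarith [sq_nonneg x, sq_nonneg y]
  have hmain : (|x + y| ^ p + |x - y| ^ p) / 2 ≤ (x ^ 2 + (p - 1) * y ^ 2) ^ (p / 2) := by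
    rw [habs, hsum, hdiff]
    calc ((A + B) ^ p + (A - B) ^ p) / 2 ≤ (A ^ 2 + (p - 1) * B ^ 2) ^ (p / 2) :=
          main0 hp hB0 hBA
      _ ≤ (x ^ 2 + (p - 1) * y ^ 2) ^ (p / 2) :=
          Real.rpow_le_rpow (by nlinarith [sq_nonneg A, sq_nonneg B]) hRA (by positivity)
  have hS0 : (0:ℝ) ≤ (|x + y| ^ p + |x - y| ^ p) / 2 := by
    have := Real.rpow_nonneg (abs_nonneg (x + y)) p
    have := Real.rpow_nonneg (abs_nonneg (x - y)) p
    linarith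
  calc ((|x + y| ^ p + |x - y| ^ p) / 2) ^ (2 / p)
      ≤ ((x ^ 2 + (p - 1) * y ^ 2) ^ (p / 2)) ^ (2 / p) :=
        Real.rpow_le_rpow hS0 hmain (by positivity)
    _ = x ^ 2 + (p - 1) * y ^ 2 := by
        rw [← Real.rpow_mul hR0, show p / 2 * (2 / p) = 1 by field_simp, Real.rpow_one]
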